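/- arXiv:1506.05711 — 3 statements merged into one kernel-verified Lean document; each statement's English description precedes it below -/
import Mathlib

section
/- For a subgroup A of ℚ containing ℤ, the quotient group ℚ/A is isomorphic to a direct sum, over the set J of primes p at which the p-height of 1 in A is finite, of Prüfer groups ℤ(p^∞). -/
/-- `ℚ/ℤ` as the quotient of the additive group of rationals by the subgroup ℤ. -/
abbrev QmodZ : Type := ℚ ⧸ AddSubgroup.zmultiples (1 : ℚ)

/-- The `p`-height of `1` in a subgroup `A ≤ ℚ` is finite precisely when
`1 ∈ p^r A` (i.e. `(p^r)⁻¹ ∈ A`) fails for some `r`.  `J A` is the set of primes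
where the height is finite. -/
def finiteHeightPrimes (A : AddSubgroup ℚ) : Set ℕ :=
  {p : ℕ | p.Prime ∧ ∃ r : ℕ, ((p : ℚ) ^ r)⁻¹ ∉ A}

instance (A : AddSubgroup ℚ) (q : finiteHeightPrimes A) : Fact (q.1.Prime) :=
  ⟨q.2.1⟩

open scoped Classical

namespace PruferAux

variable {A : AddSubgroup ℚ}

lemma intCast_mem (hA : AddSubgroup.zmultiples (1 : ℚ) ≤ A) (z : ℤ) : (z : ℚ) ∈ A := by
  apply hA
  rw [AddSubgroup.mem_zmultiples_iff]
  exact ⟨z, by simp⟩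

lemma mk_intCast_eq_zero (z : ℤ) :
    (QuotientAddGroup.mk (z : ℚ) : QmodZ) = 0 := by
  rw [QuotientAddGroup.eq_zero_iff, AddSubgroup.mem_zmultiples_iff]
  exact ⟨z, by simp⟩

/-- Bezout trick: if `a/n ∈ A`, `1 ∈ A`, and `gcd a n = 1`, then `1/n ∈ A`. -/
lemma inv_mem_of_coprime (hA : AddSubgroup.zmultiples (1 : ℚ) ≤ A)
    (a : ℤ) (n : ℕ) (hn : 0 < n) (hco : Int.gcd a (n : ℤ) = 1)
    (h : (a : ℚ) / (n : ℚ) ∈ A) : ((n : ℚ))⁻¹ ∈ A := by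
  obtain ⟨u, v, huv⟩ := Int.isCoprime_iff_gcd_eq_one.mpr hco
  have hn' : (n : ℚ) ≠ 0 := Nat.cast_ne_zero.mpr hn.ne'
  have hQ : (u : ℚ) * a + v * n = 1 := by exact_mod_cast huv
  have key : ((u:ℚ) * a + v * n) * ((n:ℚ))⁻¹ = u • ((a : ℚ) / (n : ℚ)) + v • (1 : ℚ) := by
    rw [zsmul_eq_mul, zsmul_eq_mul]
    field_simp
  rw [hQ, one_mul] at key
  rw [key]
  exact A.add_mem (A.zsmul_mem h u) (A.zsmul_mem (intCast_mem hA 1) v)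

lemma den_inv_mem (hA : AddSubgroup.zmultiples (1 : ℚ) ≤ A) {q : ℚ} (hq : q ∈ A) :
    ((q.den : ℚ))⁻¹ ∈ A := by
  apply inv_mem_of_coprime hA q.num q.den q.pos
  · have := q.reduced
    simpa [Int.gcd] using this
  · rw [Rat.num_div_den]; exact hq

lemma inv_mem_of_dvd {n m : ℕ} (hm : 0 < m) (hnm : n ∣ m)
    (h : ((m : ℚ))⁻¹ ∈ A) : ((n : ℚ))⁻¹ ∈ A := by
  obtain ⟨c, rfl⟩ := hnm
  have hn : n ≠ 0 := by rintro rfl; simp at hm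
  have hc : c ≠ 0 := by rintro rfl; simp at hm
  have key : ((n : ℚ))⁻¹ = c • (((n * c : ℕ) : ℚ))⁻¹ := by
    rw [nsmul_eq_mul]
    push_cast
    rw [mul_inv]
    field_simp
  rw [key]
  exact A.nsmul_mem h c

/-- the height of `1` at a prime of finite height -/
noncomputable def kA (p : finiteHeightPrimes A) : ℕ := Nat.find p.2.2 - 1

lemma find_pos (hA : AddSubgroup.zmultiples (1 : ℚ) ≤ A) (p : finiteHeightPrimes A) :
    0 < Nat.find p.2.2 := by
  rcases Nat.eq_zero_or_pos (Nat.find p.2.2) with h | h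
  · exfalso
    have := Nat.find_spec p.2.2
    rw [h] at this
    simp only [pow_zero, inv_one] at this
    exact this (by simpa using intCast_mem hA 1)
  · exact h

lemma kA_succ (hA : AddSubgroup.zmultiples (1 : ℚ) ≤ A) (p : finiteHeightPrimes A) :
    kA p + 1 = Nat.find p.2.2 :=
  Nat.succ_pred_eq_of_pos (find_pos hA p)

lemma kA_spec1 (hA : AddSubgroup.zmultiples (1 : ℚ) ≤ A) (p : finiteHeightPrimes A) :
    (((p : ℕ) : ℚ) ^ kA p)⁻¹ ∈ A := by
  by_contra h
  have h1 := Nat.find_min' p.2.2 h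
  have h2 := find_pos hA p
  simp only [kA] at h1
  omega

lemma kA_spec2 (hA : AddSubgroup.zmultiples (1 : ℚ) ≤ A) (p : finiteHeightPrimes A) :
    (((p : ℕ) : ℚ) ^ (kA p + 1))⁻¹ ∉ A := by
  rw [kA_succ hA p]
  exact Nat.find_spec p.2.2

end PruferAux

namespace PruferAux

variable {A : AddSubgroup ℚ}

lemma den_int_div_dvd (a : ℤ) (n : ℕ) (hn : 0 < n) : ((a : ℚ) / (n : ℚ)).den ∣ n := by
  have h := Rat.mul_den_dvd (a : ℚ) ((n : ℚ))⁻¹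
  rw [Rat.den_intCast, one_mul, Rat.inv_natCast_den_of_pos hn] at h
  rw [div_eq_mul_inv]
  exact h

lemma mem_primary_of_nsmul (p : ℕ) [Fact p.Prime] (x : QmodZ) (n : ℕ)
    (h : p ^ n • x = 0) : x ∈ AddCommGroup.primaryComponent QmodZ p := by
  have hd := addOrderOf_dvd_of_nsmul_eq_zero h
  obtain ⟨i, _, hi⟩ := (Nat.dvd_prime_pow Fact.out).mp hd
  exact ⟨n, h⟩

lemma exists_rep_of_mem_primary (p : ℕ) [Fact p.Prime]
    (x : AddCommGroup.primaryComponent QmodZ p) :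
    ∃ r : ℚ, (QuotientAddGroup.mk r : QmodZ) = (x : QmodZ) ∧ ∃ i, r.den = p ^ i := by
  obtain ⟨r, hr⟩ := QuotientAddGroup.mk_surjective (x : QmodZ)
  refine ⟨r, hr, ?_⟩
  obtain ⟨n, hn⟩ := x.2
  have h0 : p ^ n • (x : QmodZ) = 0 := by rw [← hn]
  rw [← hr] at h0
  have h1 : (QuotientAddGroup.mk (p ^ n • r) : QmodZ) = 0 := by
    have := map_nsmul (QuotientAddGroup.mk' (AddSubgroup.zmultiples (1 : ℚ))) (p ^ n) r
    rw [QuotientAddGroup.mk'_apply, QuotientAddGroup.mk'_apply] at this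
    rw [this]
    exact h0
  rw [QuotientAddGroup.eq_zero_iff, AddSubgroup.mem_zmultiples_iff] at h1
  obtain ⟨z, hz⟩ := h1
  have hp : 0 < p ^ n := pow_pos (Fact.out (p := p.Prime)).pos n
  have hr2 : r = (z : ℚ) / ((p ^ n : ℕ) : ℚ) := by
    have hne : ((p ^ n : ℕ) : ℚ) ≠ 0 := Nat.cast_ne_zero.mpr hp.ne'
    rw [eq_div_iff hne]
    rw [zsmul_eq_mul, mul_one] at hz
    rw [nsmul_eq_mul] at hz
    push_cast at hz ⊢
    linarith [hz]
  have hdvd : r.den ∣ p ^ n := by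
    rw [hr2]
    exact den_int_div_dvd z (p ^ n) hp
  obtain ⟨i, _, hi⟩ := (Nat.dvd_prime_pow Fact.out).mp hdvd
  exact ⟨i, hi⟩

/-- The map `QmodZ → ℚ/A` induced by division by `p ^ kA p`. -/
noncomputable def phi (hA : AddSubgroup.zmultiples (1 : ℚ) ≤ A) (p : finiteHeightPrimes A) :
    QmodZ →+ ℚ ⧸ A :=
  QuotientAddGroup.map _ _ (AddMonoidHom.mulLeft ((((p : ℕ) : ℚ) ^ kA p)⁻¹)) (by
    intro x hx
    rw [AddSubgroup.mem_comap]
    rw [AddSubgroup.mem_zmultiples_iff] at hx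
    obtain ⟨z, hz⟩ := hx
    show ((((p : ℕ) : ℚ)) ^ kA p)⁻¹ * x ∈ A
    rw [← hz, zsmul_eq_mul, mul_one, mul_comm, ← zsmul_eq_mul]
    exact A.zsmul_mem (kA_spec1 hA p) z)

lemma phi_mk (hA : AddSubgroup.zmultiples (1 : ℚ) ≤ A) (p : finiteHeightPrimes A) (r : ℚ) :
    phi hA p (QuotientAddGroup.mk r) =
      QuotientAddGroup.mk (((((p : ℕ) : ℚ)) ^ kA p)⁻¹ * r) :=
  QuotientAddGroup.map_mk _ _ _ _ r

/-- The candidate isomorphism, as a hom from the direct sum to `ℚ/A`. -/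
noncomputable def gmap (hA : AddSubgroup.zmultiples (1 : ℚ) ≤ A) :
    DirectSum (finiteHeightPrimes A)
      (fun q => AddCommGroup.primaryComponent QmodZ q.1) →+ ℚ ⧸ A :=
  DirectSum.toAddMonoid fun p => (phi hA p).comp (AddCommGroup.primaryComponent QmodZ p.1).subtype

lemma gmap_of (hA : AddSubgroup.zmultiples (1 : ℚ) ≤ A) (p : finiteHeightPrimes A)
    (x : AddCommGroup.primaryComponent QmodZ p.1) (r : ℚ)
    (hr : (QuotientAddGroup.mk r : QmodZ) = (x : QmodZ)) :
    gmap hA (DirectSum.of _ p x) =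
      QuotientAddGroup.mk (((((p : ℕ) : ℚ)) ^ kA p)⁻¹ * r) := by
  unfold gmap
  rw [DirectSum.toAddMonoid_of]
  simp only [AddMonoidHom.comp_apply, AddSubgroup.coe_subtype]
  rw [← hr, phi_mk]

end PruferAux

namespace PruferAux

variable {A : AddSubgroup ℚ}

lemma pow_inv_mem_mono (hA : AddSubgroup.zmultiples (1 : ℚ) ≤ A) {p : ℕ} (hp : 0 < p)
    {r s : ℕ} (hrs : r ≤ s) (hs : ((p : ℚ) ^ s)⁻¹ ∈ A) : ((p : ℚ) ^ r)⁻¹ ∈ A := by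
  have h1 : (((p ^ s : ℕ) : ℚ))⁻¹ ∈ A := by push_cast; exact hs
  have h2 := inv_mem_of_dvd (A := A) (pow_pos hp s) (pow_dvd_pow p hrs) h1
  push_cast at h2
  exact h2

lemma mk_mem_range (hA : AddSubgroup.zmultiples (1 : ℚ) ≤ A) (q : ℚ) :
    (QuotientAddGroup.mk q : ℚ ⧸ A) ∈ (gmap hA).range := by
  suffices H : ∀ n : ℕ, ∀ q : ℚ, q.den = n →
      (QuotientAddGroup.mk q : ℚ ⧸ A) ∈ (gmap hA).range from H q.den q rfl
  intro n
  induction n using Nat.strong_induction_on with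
  | _ n ih =>
    intro q hq
    by_cases hden1 : q.den = 1
    · have hqA : q ∈ A := by
        have h := (Rat.den_eq_one_iff q).mp hden1
        rw [← h]
        exact intCast_mem hA q.num
      have h0 : (QuotientAddGroup.mk q : ℚ ⧸ A) = 0 :=
        (QuotientAddGroup.eq_zero_iff q).mpr hqA
      rw [h0]
      exact zero_mem _
    · -- main case
      set p := q.den.minFac with hpdef
      have hp : p.Prime := Nat.minFac_prime hden1
      have hden0 : q.den ≠ 0 := q.den_nz
      set e := q.den.factorization p with hedef
      have he : 0 < e := hp.factorization_pos_of_dvd hden0 (Nat.minFac_dvd _)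
      set m := q.den / p ^ e with hmdef
      have hsplit : p ^ e * m = q.den := Nat.ordProj_mul_ordCompl_eq_self q.den p
      have hpm : ¬ p ∣ m := Nat.not_dvd_ordCompl hp hden0
      have hm0 : 0 < m := Nat.ordCompl_pos p hden0
      have hmlt : m < q.den := by
        have h1 : 1 < p ^ e := Nat.one_lt_pow he.ne' hp.one_lt
        calc m = 1 * m := (one_mul m).symm
        _ < p ^ e * m := (Nat.mul_lt_mul_right hm0).mpr h1
        _ = q.den := hsplit
      have hco : Nat.Coprime (p ^ e) m := (hp.coprime_iff_not_dvd.mpr hpm).pow_left e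
      obtain ⟨u, v, huv⟩ := Nat.isCoprime_iff_coprime.mpr hco
      have hQ : (u : ℚ) * (p : ℚ) ^ e + (v : ℚ) * (m : ℚ) = 1 := by exact_mod_cast huv
      have hp0 : (0:ℚ) < (p:ℚ) := by exact_mod_cast hp.pos
      have hpe0 : ((p : ℚ) ^ e) ≠ 0 := by positivity
      have hm0' : ((m : ℚ)) ≠ 0 := by exact_mod_cast hm0.ne'
      set x : ℚ := ((q.num * v : ℤ) : ℚ) / (p : ℚ) ^ e with hxdef
      set y : ℚ := ((q.num * u : ℤ) : ℚ) / (m : ℚ) with hydef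
      have hxy : q = x + y := by
        have hden : (q.den : ℚ) = (p : ℚ) ^ e * (m : ℚ) := by exact_mod_cast hsplit.symm
        have hq' : q = (q.num : ℚ) / (q.den : ℚ) := (Rat.num_div_den q).symm
        rw [hq', hden, hxdef, hydef]
        push_cast
        field_simp
        linear_combination ((-(q.num:ℚ) * (1 + (m:ℚ) * (p:ℚ)^e)) + (q.num:ℚ) * (m:ℚ) * (p:ℚ)^e) * hQ
      have hy : (QuotientAddGroup.mk y : ℚ ⧸ A) ∈ (gmap hA).range := by
        have hyden : y.den ∣ m := den_int_div_dvd _ m hm0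
        exact ih y.den (lt_of_le_of_lt (Nat.le_of_dvd hm0 hyden) (hq ▸ hmlt)) y rfl
      have hx : (QuotientAddGroup.mk x : ℚ ⧸ A) ∈ (gmap hA).range := by
        by_cases hpJ : p ∈ finiteHeightPrimes A
        · set P : finiteHeightPrimes A := ⟨p, hpJ⟩ with hPdef
          set k := kA P with hkdef
          by_cases hek : e ≤ k
          · -- x ∈ A
            have hinv : ((p : ℚ) ^ e)⁻¹ ∈ A :=
              pow_inv_mem_mono hA hp.pos hek (kA_spec1 hA P)
            have hxA : x ∈ A := by
              rw [hxdef, div_eq_mul_inv, ← zsmul_eq_mul]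
              exact A.zsmul_mem hinv _
            have h0 : (QuotientAddGroup.mk x : ℚ ⧸ A) = 0 :=
              (QuotientAddGroup.eq_zero_iff x).mpr hxA
            rw [h0]; exact zero_mem _
          · push_neg at hek
            haveI : Fact p.Prime := ⟨hp⟩
            set w : ℚ := ((q.num * v : ℤ) : ℚ) / (p : ℚ) ^ (e - k) with hwdef
            have hw_smul : (p : ℚ) ^ (e - k) * w = ((q.num * v : ℤ) : ℚ) := by
              rw [hwdef]
              field_simp
            have hmem : (QuotientAddGroup.mk w : QmodZ) ∈
                AddCommGroup.primaryComponent QmodZ p := by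
              apply mem_primary_of_nsmul p _ (e - k)
              have h1 := map_nsmul (QuotientAddGroup.mk' (AddSubgroup.zmultiples (1 : ℚ)))
                (p ^ (e - k)) w
              rw [QuotientAddGroup.mk'_apply, QuotientAddGroup.mk'_apply] at h1
              rw [← h1]
              have h2 : (p ^ (e - k)) • w = ((q.num * v : ℤ) : ℚ) := by
                rw [nsmul_eq_mul]; push_cast; push_cast at hw_smul; linarith [hw_smul]
              rw [h2]
              exact mk_intCast_eq_zero _
            refine ⟨DirectSum.of _ P ⟨QuotientAddGroup.mk w, hmem⟩, ?_⟩
            rw [gmap_of hA P _ w rfl]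
            congr 1
            have hpow : (p:ℚ)^e = (p:ℚ)^k * (p:ℚ)^(e-k) := by
              rw [← pow_add]
              congr 1
              omega
            rw [hwdef, hxdef, div_eq_mul_inv, div_eq_mul_inv, hpow, mul_inv]
            ring
        · have hall : ∀ r : ℕ, ((p : ℚ) ^ r)⁻¹ ∈ A := by
            intro r
            by_contra hcon
            exact hpJ ⟨hp, r, hcon⟩
          have hxA : x ∈ A := by
            rw [hxdef, div_eq_mul_inv, ← zsmul_eq_mul]
            exact A.zsmul_mem (hall e) _
          have h0 : (QuotientAddGroup.mk x : ℚ ⧸ A) = 0 :=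
            (QuotientAddGroup.eq_zero_iff x).mpr hxA
          rw [h0]; exact zero_mem _
      have hmk : (QuotientAddGroup.mk q : ℚ ⧸ A) =
          QuotientAddGroup.mk x + QuotientAddGroup.mk y := by
        rw [hxy]; rfl
      rw [hmk]
      exact AddSubgroup.add_mem _ hx hy

lemma not_dvd_den_sum {ι : Type*} {p : ℕ} (hp : p.Prime) (t : Finset ι) (f : ι → ℚ)
    (h : ∀ l ∈ t, ¬ p ∣ (f l).den) : ¬ p ∣ (∑ l ∈ t, f l).den := by
  classical
  induction t using Finset.cons_induction with
  | empty =>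
    simp only [Finset.sum_empty, Rat.den_zero]
    rw [Nat.dvd_one]
    exact hp.one_lt.ne'
  | cons a s ha ih =>
    rw [Finset.sum_cons]
    intro hd
    have hdvd := hd.trans (Rat.add_den_dvd (f a) (∑ l ∈ s, f l))
    rcases (Nat.Prime.dvd_mul hp).mp hdvd with h1 | h1
    · exact h a (Finset.mem_cons_self a s) h1
    · exact ih (fun l hl => h l (Finset.mem_cons_of_mem hl)) h1

lemma gmap_injective (hA : AddSubgroup.zmultiples (1 : ℚ) ≤ A) :
    Function.Injective (gmap hA) := by
  rw [injective_iff_map_eq_zero]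
  intro x hx
  have hrep := fun l : finiteHeightPrimes A => exists_rep_of_mem_primary l.1 (x l)
  choose r hr hi using hrep
  choose idx hidx using hi
  set s : ℚ := ∑ l ∈ DFinsupp.support x, ((((l : ℕ) : ℚ)) ^ kA l)⁻¹ * r l with hsdef
  have hxs : gmap hA x =
      ∑ l ∈ DFinsupp.support x,
        (QuotientAddGroup.mk (((((l : ℕ) : ℚ)) ^ kA l)⁻¹ * r l) : ℚ ⧸ A) := by
    conv_lhs => rw [← DirectSum.sum_support_of x]
    rw [map_sum]
    exact Finset.sum_congr rfl fun l _ => gmap_of hA l (x l) (r l) (hr l)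
  have hmk : gmap hA x = (QuotientAddGroup.mk s : ℚ ⧸ A) := by
    have h := map_sum (QuotientAddGroup.mk' A)
      (fun l : finiteHeightPrimes A => ((((l : ℕ) : ℚ)) ^ kA l)⁻¹ * r l) (DFinsupp.support x)
    rw [hxs, hsdef]
    exact h.symm
  have hsA : s ∈ A := by
    rw [hmk] at hx
    exact (QuotientAddGroup.eq_zero_iff s).mp hx
  refine DFinsupp.ext fun l => ?_
  rw [DirectSum.zero_apply]
  by_cases hl : l ∈ DFinsupp.support x
  swap
  · exact DFinsupp.notMem_support_iff.mp hl
  by_contra hxl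
  set p : ℕ := l.1 with hpdef
  have hp : p.Prime := l.2.1
  set k := kA l with hkdef
  -- the exponent of the representative is positive
  have hi1 : 1 ≤ idx l := by
    by_contra hcon
    have h0 : idx l = 0 := by omega
    have hden1 : (r l).den = 1 := by rw [hidx l, h0, pow_zero]
    have : (QuotientAddGroup.mk (r l) : QmodZ) = 0 := by
      rw [← (Rat.den_eq_one_iff (r l)).mp hden1]
      exact mk_intCast_eq_zero _
    rw [hr l] at this
    exact hxl (ZeroMemClass.coe_eq_zero.mp this)
  obtain ⟨j, hj⟩ : ∃ j, idx l = j + 1 := ⟨idx l - 1, by omega⟩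
  set a : ℤ := (r l).num with hadef
  have hpa : ¬ (p : ℤ) ∣ a := by
    intro hdvd
    have h1 : p ∣ a.natAbs := Int.natCast_dvd.mp hdvd
    have h2 : p ∣ Nat.gcd a.natAbs (r l).den :=
      Nat.dvd_gcd h1 (by rw [hidx l]; exact dvd_pow_self p (by omega))
    rw [(r l).reduced] at h2
    exact hp.one_lt.ne' (Nat.dvd_one.mp h2)
  -- split off the l-term from s
  set rest : ℚ := ∑ l' ∈ (DFinsupp.support x).erase l,
      ((((l' : ℕ) : ℚ)) ^ kA l')⁻¹ * r l' with hrestdef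
  have hsplit : (((p : ℚ)) ^ k)⁻¹ * r l + rest = s := by
    rw [hsdef, hrestdef]
    exact Finset.add_sum_erase _ (fun l' : finiteHeightPrimes A => ((((l' : ℕ) : ℚ)) ^ kA l')⁻¹ * r l') hl
  have hprest : ¬ p ∣ rest.den := by
    rw [hrestdef]
    apply not_dvd_den_sum hp
    intro l' hl'
    have hll' : l' ≠ l := Finset.ne_of_mem_erase hl'
    intro hdvd
    have hd1 : (((((l' : ℕ) : ℚ)) ^ kA l')⁻¹ * r l').den ∣
        (((((l' : ℕ) : ℚ)) ^ kA l')⁻¹).den * (r l').den := Rat.mul_den_dvd _ _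
    have hl'p : (0:ℕ) < (l' : ℕ) ^ kA l' := pow_pos l'.2.1.pos _
    have hinvden : (((((l' : ℕ) : ℚ)) ^ kA l')⁻¹).den = (l' : ℕ) ^ kA l' := by
      have : ((((l' : ℕ) ^ kA l' : ℕ)) : ℚ)⁻¹.den = (l' : ℕ) ^ kA l' :=
        Rat.inv_natCast_den_of_pos hl'p
      push_cast at this
      exact this
    rw [hinvden, hidx l'] at hd1
    have hd2 : p ∣ (l' : ℕ) ^ kA l' * (l' : ℕ) ^ idx l' := hdvd.trans hd1
    rw [← pow_add] at hd2
    have := hp.dvd_of_dvd_pow hd2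
    have heq : p = (l' : ℕ) := (Nat.prime_dvd_prime_iff_eq hp l'.2.1).mp this
    exact hll' (Subtype.ext heq.symm)
  set d : ℕ := rest.den with hddef
  have hpd : ¬ p ∣ d := hprest
  have hd0 : 0 < d := rest.pos
  -- the key element of A
  have hrl : r l = (a : ℚ) / ((p : ℚ)) ^ idx l := by
    conv_lhs => rw [← Rat.num_div_den (r l)]
    rw [hidx l]
    push_cast
    rfl
  have hrestnum : ((rest.num : ℚ)) = rest * (d : ℚ) := by
    rw [hddef]
    exact (Rat.mul_den_eq_num rest).symm
  have hp0 : ((p : ℚ)) ≠ 0 := Nat.cast_ne_zero.mpr hp.pos.ne'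
  have key : ((d * a : ℤ) : ℚ) / ((p : ℚ)) ^ (k + 1) =
      ((p ^ j * d : ℕ)) • s - ((p ^ j : ℕ)) • ((rest.num : ℚ)) := by
    rw [nsmul_eq_mul, nsmul_eq_mul, ← hsplit, hrl, hj, hrestnum]
    push_cast
    field_simp
    ring
  have hkeyA : ((d * a : ℤ) : ℚ) / ((p : ℚ)) ^ (k + 1) ∈ A := by
    rw [key]
    exact A.sub_mem (A.nsmul_mem hsA _) (A.nsmul_mem (intCast_mem hA _) _)
  have hco : Int.gcd (d * a) ((p ^ (k + 1) : ℕ) : ℤ) = 1 := by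
    have h1 : ¬ p ∣ (d * a : ℤ).natAbs := by
      rw [Int.natAbs_mul]
      intro hdvd
      rcases (Nat.Prime.dvd_mul hp).mp hdvd with h | h
      · exact hpd (by simpa using h)
      · exact hpa (Int.natCast_dvd.mpr h)
    have h2 : Nat.Coprime (d * a : ℤ).natAbs p := Nat.coprime_comm.mp (hp.coprime_iff_not_dvd.mpr h1)
    have h3 : Nat.Coprime (d * a : ℤ).natAbs (p ^ (k + 1)) := Nat.Coprime.pow_right _ h2
    show ((d : ℤ) * a).natAbs.gcd (((p ^ (k + 1) : ℕ) : ℤ)).natAbs = 1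
    rw [Int.natAbs_natCast]
    exact h3
  have hmem := inv_mem_of_coprime hA (d * a) (p ^ (k + 1)) (pow_pos hp.pos _) hco
    (by push_cast at hkeyA ⊢; exact hkeyA)
  have : (((p : ℚ)) ^ (k + 1))⁻¹ ∈ A := by push_cast at hmem; exact hmem
  exact kA_spec2 hA l this

end PruferAux

/-- For a subgroup `A` of `ℚ` containing `ℤ`, the quotient `ℚ/A` is isomorphic
to the direct sum, over the primes `p` at which the `p`-height of `1` in `A` is
finite, of the Prüfer groups `ℤ(p^∞)` (realized as the `p`-primary components
of `ℚ/ℤ`). -/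
theorem quotient_rat_by_subgroup_iso_directSum_prufer (A : AddSubgroup ℚ)
    (hA : AddSubgroup.zmultiples (1 : ℚ) ≤ A) :
    Nonempty ((ℚ ⧸ A) ≃+
      DirectSum (finiteHeightPrimes A)
        (fun q => AddCommGroup.primaryComponent QmodZ q.1)) := by
  have hsurj : Function.Surjective (PruferAux.gmap hA) := by
    intro y
    obtain ⟨q, rfl⟩ := QuotientAddGroup.mk_surjective y
    exact AddMonoidHom.mem_range.mp (PruferAux.mk_mem_range hA q)
  exact ⟨(AddEquiv.ofBijective (PruferAux.gmap hA)
    ⟨PruferAux.gmap_injective hA, hsurj⟩).symm⟩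
end

section
/- Let A be a subgroup of ℚ containing ℤ. Then A ⊗ ℤ_(p) ≅ ℤ_(p) for every prime p (i.e., A is in the extended genus of ℤ) if and only if A is a group of pseudo-integers, i.e., A contains ℤ[1/p] for no prime p. -/
lemma spanIntPrime_isPrime (p : ℕ) (hp : p.Prime) : (Ideal.span {(p : ℤ)}).IsPrime := by
  rw [Ideal.span_singleton_prime (by exact_mod_cast hp.ne_zero)]
  exact Nat.prime_iff_prime_int.mp hp

/-- The integers localized at the prime `p`, `ℤ_(p)`. -/
abbrev localIntAtPrime (p : ℕ) (hp : p.Prime) : Type :=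
  @Localization.AtPrime ℤ _ (Ideal.span {(p : ℤ)}) (spanIntPrime_isPrime p hp)

lemma myInt_mem (A : AddSubgroup ℚ) (hA : AddSubgroup.zmultiples (1 : ℚ) ≤ A) (m : ℤ) :
    (m : ℚ) ∈ A := by
  have : (m : ℚ) = m • (1 : ℚ) := by simp
  rw [this]
  exact hA (AddSubgroup.mem_zmultiples_iff.mpr ⟨m, rfl⟩)

lemma myDen (p : ℕ) (hp : p.Prime) (x : ℚ) :
    ((ordCompl[p] x.den : ℕ) : ℚ) * x = (x.num : ℚ) / (p : ℚ) ^ (x.den.factorization p) := by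
  have hd : ((p : ℚ) ^ (x.den.factorization p)) * (ordCompl[p] x.den : ℕ) = (x.den : ℚ) := by
    exact_mod_cast congrArg (Nat.cast (R := ℚ)) (Nat.ordProj_mul_ordCompl_eq_self x.den p)
  have hnum : x * x.den = x.num := Rat.mul_den_eq_num x
  have hp0 : (p:ℚ) ≠ 0 := by exact_mod_cast hp.ne_zero
  rw [eq_div_iff (pow_ne_zero _ hp0)]
  calc ((ordCompl[p] x.den : ℕ) : ℚ) * x * (p:ℚ) ^ (x.den.factorization p)
      = x * ((p : ℚ) ^ (x.den.factorization p) * (ordCompl[p] x.den : ℕ)) := by ring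
    _ = (x.num : ℚ) := by rw [hd, hnum]

lemma myL1 (p : ℕ) (hp : p.Prime) (A : AddSubgroup ℚ)
    (hA : AddSubgroup.zmultiples (1 : ℚ) ≤ A) (x : ℚ) (hx : x ∈ A) :
    (1 : ℚ) / (p : ℚ) ^ (x.den.factorization p) ∈ A := by
  set j := x.den.factorization p with hj
  rcases Nat.eq_zero_or_pos j with h0 | hpos
  · rw [h0]; simpa using myInt_mem A hA 1
  · have hden0 : x.den ≠ 0 := x.den_nz
    have hpd : p ∣ x.den := by
      have h1 := Nat.ordProj_dvd x.den p
      exact dvd_trans (dvd_pow_self p (by omega : j ≠ 0)) h1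
    have hcop1 : Nat.Coprime x.num.natAbs p := Nat.Coprime.coprime_dvd_right hpd x.reduced
    have hcop : IsCoprime (x.num) ((p:ℤ)) := by
      rw [Int.isCoprime_iff_gcd_eq_one]
      exact hcop1
    obtain ⟨c, d, hcd⟩ := hcop.pow_right (n := j)
    set n : ℕ := ordCompl[p] x.den with hn
    have h1 : (n : ℚ) * x ∈ A := by
      have := AddSubgroup.nsmul_mem A hx n
      simpa [nsmul_eq_mul] using this
    have h2 : c • ((n:ℚ) * x) + d • (1:ℚ) ∈ A :=
      AddSubgroup.add_mem A (AddSubgroup.zsmul_mem A h1 c) (AddSubgroup.zsmul_mem A (myInt_mem A hA 1) d)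
    have hcdQ : (c:ℚ) * x.num + d * (p:ℚ) ^ j = 1 := by exact_mod_cast hcd
    have heq : c • ((n:ℚ) * x) + d • (1:ℚ) = (1:ℚ) / (p:ℚ)^j := by
      rw [myDen p hp x, ← hj]
      have hp0 : ((p:ℚ))^j ≠ 0 := pow_ne_zero _ (by exact_mod_cast hp.ne_zero)
      field_simp [zsmul_eq_mul]
      linear_combination hcdQ + ((x.num:ℚ) * c) * mul_inv_cancel₀ hp0
    rwa [heq] at h2

lemma myL3 (p : ℕ) (hp : p.Prime) (A : AddSubgroup ℚ)
    (hA : AddSubgroup.zmultiples (1 : ℚ) ≤ A) (k : ℕ)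
    (hmax : ∀ j, (1 : ℚ) / (p:ℚ) ^ j ∈ A → j ≤ k) (x : ℚ) (hx : x ∈ A) :
    ∃ m n : ℤ, ¬ (p:ℤ) ∣ n ∧ (n : ℚ) * x = (m : ℚ) / (p:ℚ) ^ k := by
  set j := x.den.factorization p with hj
  have hjk : j ≤ k := hmax j (myL1 p hp A hA x hx)
  set nn : ℕ := ordCompl[p] x.den with hnn
  refine ⟨x.num * (p:ℤ) ^ (k - j), (nn : ℤ), ?_, ?_⟩
  · rw [Int.natCast_dvd_natCast]
    exact Nat.not_dvd_ordCompl hp x.den_nz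
  · rw [Int.cast_natCast, hnn, myDen p hp x, ← hj]
    have hp0 : (p:ℚ) ≠ 0 := by exact_mod_cast hp.ne_zero
    rw [div_eq_div_iff (pow_ne_zero _ hp0) (pow_ne_zero _ hp0)]
    push_cast
    rw [mul_assoc, ← pow_add]
    congr 2
    omega

lemma myDiv (p : ℕ) (hp : p.Prime) (A : AddSubgroup ℚ)
    (hA : AddSubgroup.zmultiples (1 : ℚ) ≤ A)
    (hsub : {x : ℚ | ∃ (m : ℤ) (k : ℕ), x = (m : ℚ) / (p : ℚ) ^ k} ⊆ A)
    (x : ℚ) (hx : x ∈ A) : x / p ∈ A := by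
  set j := x.den.factorization p with hj
  set n : ℕ := ordCompl[p] x.den with hn
  have hnd : ¬ p ∣ n := Nat.not_dvd_ordCompl hp x.den_nz
  have hcop : IsCoprime ((n:ℕ) : ℤ) ((p:ℤ) ^ (j+1)) := by
    have h1 : Nat.Coprime n p := Nat.coprime_comm.mp ((Nat.Prime.coprime_iff_not_dvd hp).mpr hnd)
    exact (Nat.isCoprime_iff_coprime.mpr h1).pow_right
  obtain ⟨c, d, hcd⟩ := hcop
  set q : ℚ := ((x.num * c : ℤ):ℚ)/(p:ℚ)^(j+1) + ((d * (p:ℤ)^j) • x) with hq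
  have hd : ((p : ℚ) ^ j) * (n : ℚ) = (x.den : ℚ) := by
    exact_mod_cast congrArg (Nat.cast (R := ℚ)) (Nat.ordProj_mul_ordCompl_eq_self x.den p)
  have hnum : x * ((p:ℚ)^j * (n:ℚ)) = x.num := by rw [hd]; exact Rat.mul_den_eq_num x
  have hp0 : (p:ℚ) ≠ 0 := by exact_mod_cast hp.ne_zero
  have hn0 : (n:ℚ) ≠ 0 := by
    exact_mod_cast (Nat.ordCompl_pos p x.den_nz).ne'
  have hcdQ : (c:ℚ) * n + d * (p:ℚ)^(j+1) = 1 := by exact_mod_cast hcd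
  have hpq : x / (p:ℚ) = q := by
    rw [hq, zsmul_eq_mul]
    push_cast
    field_simp
    linear_combination ((c:ℚ) * (p:ℚ)) * hnum - (x * (p:ℚ)^j * (p:ℚ)) * hcdQ
  rw [hpq]
  exact AddSubgroup.add_mem A (hsub ⟨x.num * c, j+1, by push_cast; ring⟩)
    (AddSubgroup.zsmul_mem A hx _)

lemma myTmulSmul {M N : Type*} [AddCommGroup M] [AddCommGroup N] [Module ℤ M] [Module ℤ N]
    (n : ℤ) (a : M) (s : N) : a ⊗ₜ[ℤ] (n • s) = (n • a) ⊗ₜ[ℤ] s := by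
  induction n using Int.induction_on with
  | zero => simp
  | succ i ih =>
      rw [add_zsmul, add_zsmul, one_zsmul, one_zsmul, TensorProduct.tmul_add,
        TensorProduct.add_tmul, ih]
  | pred i ih =>
      rw [sub_zsmul, sub_zsmul, one_zsmul, one_zsmul]
      rw [TensorProduct.tmul_add, TensorProduct.add_tmul,
        TensorProduct.tmul_neg, TensorProduct.neg_tmul, ih]

/-- For a subgroup `A` of `ℚ` containing `ℤ`: `A ⊗ ℤ_(p) ≅ ℤ_(p)` for every
prime `p` (i.e. `A` is in the extended genus of `ℤ`) iff `A` is a group of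
pseudo-integers, i.e. `A` contains `ℤ[1/p]` for no prime `p`. -/
theorem extended_genus_of_Z_iff_pseudo_integers (A : AddSubgroup ℚ)
    (hA : AddSubgroup.zmultiples (1 : ℚ) ≤ A) :
    (∀ (p : ℕ) (hp : p.Prime),
        Nonempty (TensorProduct ℤ A (localIntAtPrime p hp) ≃ₗ[ℤ]
          localIntAtPrime p hp)) ↔
      (∀ p : ℕ, p.Prime →
        ¬ ({x : ℚ | ∃ (m : ℤ) (k : ℕ), x = (m : ℚ) / (p : ℚ) ^ k} ⊆ A)) := by
  classical
  constructor
  · -- extended genus → pseudo-integers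
    intro h p hp hsub
    haveI := spanIntPrime_isPrime p hp
    obtain ⟨e⟩ := h p hp
    set P : Ideal ℤ := Ideal.span {(p:ℤ)} with hP
    have hpQ : (p:ℚ) ≠ 0 := by exact_mod_cast hp.ne_zero
    have hdivA : ∀ a : ↥A, ∃ b : ↥A, (p:ℤ) • b = a := by
      intro a
      refine ⟨⟨(a:ℚ)/p, myDiv p hp A hA hsub a a.2⟩, ?_⟩
      apply Subtype.ext
      show (p:ℤ) • ((a:ℚ)/p) = (a:ℚ)
      rw [zsmul_eq_mul]
      push_cast
      field_simp
    have hdivT : ∀ z : TensorProduct ℤ ↥A (localIntAtPrime p hp),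
        ∃ w, (p:ℤ) • w = z := by
      intro z
      induction z using TensorProduct.induction_on with
      | zero => exact ⟨0, smul_zero _⟩
      | tmul a r =>
          obtain ⟨b, hb⟩ := hdivA a
          exact ⟨b ⊗ₜ r, by rw [TensorProduct.smul_tmul', hb]⟩
      | add u v hu hv =>
          obtain ⟨w1, h1⟩ := hu
          obtain ⟨w2, h2⟩ := hv
          exact ⟨w1 + w2, by rw [smul_add, h1, h2]⟩
    obtain ⟨w, hw⟩ := hdivT (e.symm 1)
    have h1 : (p:ℤ) • e w = 1 := by rw [← map_smul, hw, e.apply_symm_apply]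
    have hu2 : IsUnit (algebraMap ℤ (localIntAtPrime p hp) (p:ℤ)) := by
      refine IsUnit.of_mul_eq_one (e w) ?_
      rw [eq_intCast (algebraMap ℤ (localIntAtPrime p hp)), ← zsmul_eq_mul]
      exact h1
    rw [IsLocalization.AtPrime.isUnit_to_map_iff (localIntAtPrime p hp) P] at hu2
    exact hu2 (Ideal.mem_span_singleton_self _)
  · -- pseudo-integers → extended genus
    intro h p hp
    haveI := spanIntPrime_isPrime p hp
    set P : Ideal ℤ := Ideal.span {(p:ℤ)} with hP
    set L := localIntAtPrime p hp with hLdef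
    have hpQ : (p:ℚ) ≠ 0 := by exact_mod_cast hp.ne_zero
    obtain ⟨x₀, hx₀mem, hx₀A⟩ := Set.not_subset.mp (h p hp)
    obtain ⟨m₀, t, hx₀⟩ := hx₀mem
    have hbound : ∀ j : ℕ, (1:ℚ)/(p:ℚ)^j ∈ A → j < t := by
      intro j hj
      by_contra hjt
      push_neg at hjt
      have h1t : (1:ℚ)/(p:ℚ)^t ∈ A := by
        have h2 := AddSubgroup.zsmul_mem A hj ((p:ℤ)^(j-t))
        have h3 : ((p:ℤ)^(j-t)) • ((1:ℚ)/(p:ℚ)^j) = (1:ℚ)/(p:ℚ)^t := by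
          rw [zsmul_eq_mul]
          push_cast
          rw [mul_one_div, div_eq_div_iff (pow_ne_zero _ hpQ) (pow_ne_zero _ hpQ),
            one_mul, ← pow_add]
          congr 1
          omega
        rwa [h3] at h2
      refine hx₀A ?_
      rw [hx₀]
      have h4 := AddSubgroup.zsmul_mem A h1t m₀
      simpa [zsmul_eq_mul, mul_one_div, div_eq_mul_inv] using h4
    set k := Nat.findGreatest (fun j => (1:ℚ)/(p:ℚ)^j ∈ A) t with hkdef
    have hQ0 : (1:ℚ)/(p:ℚ)^0 ∈ A := by simpa using myInt_mem A hA 1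
    have hk : (1:ℚ)/(p:ℚ)^k ∈ A :=
      Nat.findGreatest_spec (P := fun j => (1:ℚ)/(p:ℚ)^j ∈ A) (Nat.zero_le t) hQ0
    have hmax : ∀ j, (1:ℚ)/(p:ℚ)^j ∈ A → j ≤ k :=
      fun j hj => Nat.le_findGreatest (P := fun j => (1:ℚ)/(p:ℚ)^j ∈ A)
        (le_of_lt (hbound j hj)) hj
    set a₀ : ↥A := ⟨(1:ℚ)/(p:ℚ)^k, hk⟩ with ha₀
    -- the ring hom f : L → ℚ
    have hu : ∀ s : P.primeCompl, IsUnit (algebraMap ℤ ℚ (s:ℤ)) := by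
      intro s
      rw [algebraMap_int_eq, eq_intCast, isUnit_iff_ne_zero, Int.cast_ne_zero]
      intro h0
      have hs : (s:ℤ) ∉ P := s.2
      exact hs (h0 ▸ P.zero_mem)
    set f : L →+* ℚ := IsLocalization.lift hu with hfdef
    have hM : P.primeCompl ≤ nonZeroDivisors ℤ := by
      intro s hs
      have hs' : s ∉ P := hs
      exact mem_nonZeroDivisors_of_ne_zero fun h0 => hs' (h0 ▸ P.zero_mem)
    have hinj0 : Function.Injective (algebraMap ℤ L) :=
      IsLocalization.injective (M := P.primeCompl) L hM
    have finj : Function.Injective f := by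
      rw [hfdef, IsLocalization.lift_injective_iff]
      intro x y
      constructor
      · intro h1; exact congrArg _ (hinj0 h1)
      · intro h1
        rw [algebraMap_int_eq, eq_intCast, eq_intCast] at h1
        have : x = y := by exact_mod_cast h1
        rw [this]
    set g : L →ₗ[ℤ] TensorProduct ℤ ↥A L := TensorProduct.mk ℤ ↥A L a₀ with hgdef
    -- bilinear map for injectivity
    set b : ↥A →ₗ[ℤ] L →ₗ[ℤ] ℚ := LinearMap.mk₂ ℤ (fun a r => (a:ℚ) * f r)
      (fun a a' r => by push_cast; ring)
      (fun c a r => by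
        show ((c • a : ↥A) : ℚ) * f r = c • ((a:ℚ) * f r)
        rw [show ((c • a : ↥A) : ℚ) = c • (a:ℚ) from rfl, zsmul_eq_mul, zsmul_eq_mul]
        ring)
      (fun a r r' => by
        show (a:ℚ) * f (r + r') = (a:ℚ) * f r + (a:ℚ) * f r'
        rw [map_add]; ring)
      (fun c a r => by
        show (a:ℚ) * f (c • r) = c • ((a:ℚ) * f r)
        rw [zsmul_eq_mul r c, map_mul, map_intCast, zsmul_eq_mul]; ring) with hbdef
    set T := TensorProduct.lift b with hTdef
    have hT : ∀ (a : ↥A) (r : L), T (a ⊗ₜ r) = (a:ℚ) * f r := by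
      intro a r
      rw [hTdef, TensorProduct.lift.tmul]
      rfl
    have ginj : Function.Injective g := by
      intro r₁ r₂ hr
      have h2 := congrArg T hr
      rw [hgdef] at h2
      change T (a₀ ⊗ₜ r₁) = T (a₀ ⊗ₜ r₂) at h2
      rw [hT, hT] at h2
      have h3 : f r₁ = f r₂ :=
        mul_left_cancel₀ (one_div_ne_zero (pow_ne_zero _ hpQ)) h2
      exact finj h3
    have gsurj : Function.Surjective g := by
      intro z
      induction z using TensorProduct.induction_on with
      | zero => exact ⟨0, map_zero g⟩
      | add u v hu' hv' =>
          obtain ⟨w1, h1⟩ := hu'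
          obtain ⟨w2, h2⟩ := hv'
          exact ⟨w1 + w2, by rw [map_add, h1, h2]⟩
      | tmul a r =>
          obtain ⟨m, n, hnd, heq⟩ := myL3 p hp A hA k hmax a a.2
          have hnP : n ∈ P.primeCompl := by
            intro hmem
            exact hnd (Ideal.mem_span_singleton.mp hmem)
          have hu3 : IsUnit (algebraMap ℤ L n) := IsLocalization.map_units L ⟨n, hnP⟩
          obtain ⟨v, hv⟩ := hu3
          refine ⟨m • ((v⁻¹ : Lˣ) * r), ?_⟩
          have hna : (n : ℤ) • a = m • a₀ := by
            apply Subtype.ext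
            show n • (a:ℚ) = m • ((1:ℚ)/(p:ℚ)^k)
            rw [zsmul_eq_mul, zsmul_eq_mul, mul_one_div]
            exact heq
          have hr : ((n : ℤ) : L) * ((v⁻¹ : Lˣ) * r) = r := by
            rw [← eq_intCast (algebraMap ℤ L) n, ← hv, ← mul_assoc, Units.mul_inv, one_mul]
          calc g (m • ((v⁻¹ : Lˣ) * r))
              = m • (a₀ ⊗ₜ[ℤ] ((v⁻¹ : Lˣ) * r)) := map_smul g m _
            _ = (m • a₀) ⊗ₜ[ℤ] ((v⁻¹ : Lˣ) * r) := TensorProduct.smul_tmul' m a₀ _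
            _ = ((n : ℤ) • a) ⊗ₜ[ℤ] ((v⁻¹ : Lˣ) * r) := by rw [hna]
            _ = a ⊗ₜ[ℤ] ((n : ℤ) • ((v⁻¹ : Lˣ) * r)) := (myTmulSmul _ _ _).symm
            _ = a ⊗ₜ[ℤ] r := by rw [zsmul_eq_mul, hr]
    exact ⟨(LinearEquiv.ofBijective g ⟨ginj, gsurj⟩).symm⟩
end

section
/- A homomorphism ∂ : ℚ → ℚ/ℤ is surjective if and only if its kernel is a group of pseudo-integers (up to isomorphism), i.e., a torsion-free rank-one group whose height sequence has only finite entries. -/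
/-- The `p`-height of `1` in a subgroup `A ≤ ℚ`:
`k_p(A) = sup { r ≥ 0 : 1 ∈ p^r A } ∈ ℕ ∪ {∞}`. -/
noncomputable def pHeight (A : AddSubgroup ℚ) (p : ℕ) : ℕ∞ :=
  ⨆ r ∈ {r : ℕ | ((p : ℚ) ^ r)⁻¹ ∈ A}, (r : ℕ∞)

-- membership in zmultiples 1
lemma mem_zmul_one {x : ℚ} : x ∈ AddSubgroup.zmultiples (1 : ℚ) ↔ ∃ n : ℤ, (n : ℚ) = x := by
  simp [AddSubgroup.mem_zmultiples_iff]

-- the kernel contains a nonzero element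
lemma ker_ne_bot (d : ℚ →+ QmodZ) : ∃ b : ℚ, b ≠ 0 ∧ b ∈ d.ker := by
  obtain ⟨q, hq⟩ := QuotientAddGroup.mk_surjective (d 1)
  refine ⟨(q.den : ℚ), by positivity, ?_⟩
  have : d ((q.den : ℚ)) = (q.den : ℤ) • d 1 := by
    rw [← map_zsmul]; norm_num
  rw [AddMonoidHom.mem_ker, this, ← hq]
  have : (q.den : ℤ) • (QuotientAddGroup.mk q : QmodZ) = QuotientAddGroup.mk ((q.den : ℤ) • q) := rfl
  rw [this, QuotientAddGroup.eq_zero_iff, mem_zmul_one]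
  refine ⟨q.num, ?_⟩
  rw [zsmul_eq_mul, mul_comm]
  exact_mod_cast (Rat.mul_den_eq_num q).symm

-- Bezout membership
lemma inv_mem_of_coprime (A : AddSubgroup ℚ) (h1 : (1:ℚ) ∈ A) {m : ℤ} {t : ℕ} (ht : t ≠ 0)
    (hco : IsCoprime m (t : ℤ)) (hm : (m : ℚ) / (t : ℚ) ∈ A) : ((t : ℚ))⁻¹ ∈ A := by
  obtain ⟨u, w, huw⟩ := hco
  have ht' : (t : ℚ) ≠ 0 := Nat.cast_ne_zero.mpr ht
  have : ((t : ℚ))⁻¹ = u • ((m : ℚ) / t) + w • (1:ℚ) := by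
    rw [zsmul_eq_mul, zsmul_eq_mul]
    field_simp
    have := congrArg (fun z : ℤ => (z : ℚ)) huw
    push_cast at this
    linarith [this]
  rw [this]
  exact A.add_mem (A.zsmul_mem hm u) (A.zsmul_mem h1 w)

-- bound from finite height
lemma pHeight_bound {A : AddSubgroup ℚ} {p : ℕ} (h : pHeight A p ≠ ⊤) :
    ∃ N : ℕ, ∀ r : ℕ, ((p : ℚ) ^ r)⁻¹ ∈ A → r ≤ N := by
  obtain ⟨N, hN⟩ := WithTop.ne_top_iff_exists.mp h
  refine ⟨N, fun r hr => ?_⟩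
  have : (r : ℕ∞) ≤ pHeight A p := le_biSup _ hr
  rw [← hN] at this
  exact Nat.cast_le.mp this

-- unboundedness from infinite height, plus downward closure
lemma inv_pow_mem_of_pHeight_top {A : AddSubgroup ℚ} {p : ℕ} (hp : p.Prime)
    (h : pHeight A p = ⊤) (k : ℕ) : ((p : ℚ) ^ k)⁻¹ ∈ A := by
  have hub : ∃ r : ℕ, ((p : ℚ) ^ r)⁻¹ ∈ A ∧ k ≤ r := by
    by_contra hc
    push_neg at hc
    have : pHeight A p ≤ (k : ℕ∞) := by
      refine iSup₂_le fun r hr => ?_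
      exact_mod_cast (hc r hr).le
    rw [h] at this
    exact (lt_irrefl _ (lt_of_le_of_lt this (WithTop.coe_lt_top k)))
  obtain ⟨r, hr, hkr⟩ := hub
  have hp0 : (p : ℚ) ≠ 0 := Nat.cast_ne_zero.mpr hp.ne_zero
  have : ((p : ℚ) ^ k)⁻¹ = ((p : ℤ) ^ (r - k)) • ((p : ℚ) ^ r)⁻¹ := by
    rw [zsmul_eq_mul]
    push_cast
    have h2 : (p:ℚ) ^ r = (p:ℚ) ^ (r - k) * (p:ℚ) ^ k := by
      rw [← pow_add]; congr 1; omega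
    rw [h2, mul_inv, ← mul_assoc, mul_inv_cancel₀ (by positivity), one_mul]
  rw [this]
  exact A.zsmul_mem hr _

-- forward-direction: closure under division by p when all inverse powers are present
lemma div_p_mem {A : AddSubgroup ℚ} {p : ℕ} (hp : p.Prime)
    (hall : ∀ r : ℕ, ((p : ℚ) ^ r)⁻¹ ∈ A) {x : ℚ} (hx : x ∈ A) : x / p ∈ A := by
  set a := x.den.factorization p with ha
  set q := x.den / p ^ a with hqdef
  have hden0 : x.den ≠ 0 := x.den_nz
  have hq : p ^ a * q = x.den := Nat.ordProj_mul_ordCompl_eq_self x.den p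
  have hcop : Nat.Coprime (p ^ (a+1)) q := (Nat.coprime_ordCompl hp hden0).pow_left _
  obtain ⟨u, w, huw⟩ := (Nat.isCoprime_iff_coprime.mpr hcop)
  have hp0 : (p : ℚ) ≠ 0 := Nat.cast_ne_zero.mpr hp.ne_zero
  have hq0 : (q : ℚ) ≠ 0 := by
    have : q ≠ 0 := by
      intro h; rw [h, mul_zero] at hq; exact hden0 hq.symm
    exact_mod_cast Nat.cast_ne_zero.mpr this
  have hxd : x * ((p:ℚ)^a * q) = x.num := by
    have := Rat.mul_den_eq_num x
    rw [← this]; congr 1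
    exact_mod_cast congrArg (fun n : ℕ => (n : ℚ)) hq
  have key : x / p = (x.num * w) • ((p:ℚ)^(a+1))⁻¹ + (u * (p:ℤ)^a) • x := by
    rw [zsmul_eq_mul, zsmul_eq_mul]
    have huwQ : (u : ℚ) * (p:ℚ)^(a+1) + (w:ℚ) * q = 1 := by exact_mod_cast huw
    push_cast
    field_simp
    linear_combination ((w:ℚ) * (p:ℚ)) * hxd - (x * (p:ℚ)^(a+1)) * huwQ
  rw [key]
  exact A.add_mem (A.zsmul_mem (hall (a+1)) _) (A.zsmul_mem hx _)

-- backward-direction: finite height at 1 bounds divisibility of any nonzero element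
lemma bounded_div {A : AddSubgroup ℚ} {p : ℕ} (hp : p.Prime) (h1 : (1:ℚ) ∈ A)
    (hfin : pHeight A p ≠ ⊤) {x : ℚ} (hx : x ∈ A) (hx0 : x ≠ 0) :
    ∃ N : ℕ, ∀ j : ℕ, x / (p:ℚ) ^ j ∈ A → j ≤ N := by
  obtain ⟨N, hN⟩ := pHeight_bound hfin
  set n0 := x.num.natAbs with hn0
  have hn00 : n0 ≠ 0 := by
    simp [hn0, Int.natAbs_eq_zero, Rat.num_ne_zero.mpr hx0]
  set v := n0.factorization p with hv
  set q0 := n0 / p ^ v with hq0def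
  have hq0 : p ^ v * q0 = n0 := Nat.ordProj_mul_ordCompl_eq_self n0 p
  have hcop : Nat.Coprime q0 p := (Nat.coprime_ordCompl hp hn00).symm
  refine ⟨N + v, fun j hj => ?_⟩
  by_cases hjv : j ≤ v
  · omega
  · -- j > v : derive (p^(j-v))⁻¹ ∈ A, hence j - v ≤ N
    have hp0 : (p : ℚ) ≠ 0 := Nat.cast_ne_zero.mpr hp.ne_zero
    -- first, (n0 : ℚ) / p^j ∈ A
    have hnum : (x.num : ℚ) / (p:ℚ)^j ∈ A := by
      have := A.zsmul_mem hj (x.den : ℤ)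
      have heq : (x.den : ℤ) • (x / (p:ℚ)^j) = (x.num : ℚ) / (p:ℚ)^j := by
        rw [zsmul_eq_mul]
        have hxd := Rat.mul_den_eq_num x
        field_simp
        push_cast; linarith [hxd]
      rwa [heq] at this
    have habs : (n0 : ℚ) / (p:ℚ)^j ∈ A := by
      rcases Int.natAbs_eq x.num with h | h
      · rw [hn0]; rwa [h] at hnum;
      · have := A.neg_mem hnum
        rw [← neg_div] at this
        rw [hn0]
        rwa [h, Int.cast_neg, neg_neg] at this
    -- (q0 : ℚ) / p^(j - v) ∈ A
    have hqmem : ((q0 : ℤ) : ℚ) / ((p ^ (j - v) : ℕ) : ℚ) ∈ A := by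
      have heq : ((q0 : ℤ) : ℚ) / ((p ^ (j - v) : ℕ) : ℚ) = (n0 : ℚ) / (p:ℚ)^j := by
        push_cast
        rw [div_eq_div_iff (by positivity) (by positivity)]
        have : (n0 : ℚ) = (p:ℚ)^v * q0 := by exact_mod_cast (congrArg (fun m : ℕ => (m:ℚ)) hq0).symm
        have hvj : (p:ℚ)^j = (p:ℚ)^v * (p:ℚ)^(j-v) := by
          rw [← pow_add]; congr 1; omega
        rw [this, hvj]; ring
      rw [heq]; exact habs
    have hco2 : IsCoprime ((q0 : ℤ)) ((p ^ (j - v) : ℕ) : ℤ) := by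
      rw [Nat.isCoprime_iff_coprime]
      exact (hcop.pow_right _)
    have := inv_mem_of_coprime A h1 (pow_ne_zero _ hp.ne_zero) hco2 hqmem
    have hfinal : ((p:ℚ) ^ (j - v))⁻¹ ∈ A := by
      rwa [Nat.cast_pow] at this
    have := hN _ hfinal
    omega

/-- multiplication by a nonzero rational as an additive automorphism -/
def mulQ (b : ℚ) (hb : b ≠ 0) : ℚ ≃+ ℚ where
  toFun x := b * x
  invFun x := b⁻¹ * x
  left_inv x := by field_simp
  right_inv x := by field_simp
  map_add' x y := mul_add b x y

lemma mulQ_apply (b : ℚ) (hb : b ≠ 0) (x : ℚ) : mulQ b hb x = b * x := rfl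

/-- A homomorphism `∂ : ℚ → ℚ/ℤ` is surjective iff its kernel is, up to
isomorphism, a group of pseudo-integers: a subgroup of `ℚ` containing `ℤ` whose
height sequence has only finite entries. -/
theorem surjective_iff_ker_pseudo_integers (d : ℚ →+ QmodZ) :
    Function.Surjective d ↔
      ∃ A : AddSubgroup ℚ, AddSubgroup.zmultiples (1 : ℚ) ≤ A ∧
        (∀ p : ℕ, p.Prime → pHeight A p ≠ ⊤) ∧ Nonempty (d.ker ≃+ A) := by
  obtain ⟨b, hb0, hbK⟩ := ker_ne_bot d
  constructor
  · -- forward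
    intro hsurj
    set e := (mulQ b hb0).symm with he
    set A := d.ker.map e.toAddMonoidHom with hA
    have hmemA : ∀ x : ℚ, x ∈ A ↔ b * x ∈ d.ker := by
      intro x
      rw [hA, AddSubgroup.mem_map_equiv]
      simp [he, mulQ_apply]
    refine ⟨A, ?_, ?_, ⟨e.addSubgroupMap d.ker⟩⟩
    · rw [AddSubgroup.zmultiples_le, hmemA, mul_one]; exact hbK
    · intro p hp htop
      have hall := fun r => inv_pow_mem_of_pHeight_top hp htop r
      -- get x with d x = mk (p⁻¹)
      obtain ⟨x, hx⟩ := hsurj (QuotientAddGroup.mk ((p:ℚ)⁻¹))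
      have hp0 : (p : ℚ) ≠ 0 := Nat.cast_ne_zero.mpr hp.ne_zero
      -- p • x ∈ ker
      have hpx : (p : ℚ) * x ∈ d.ker := by
        rw [AddMonoidHom.mem_ker]
        have : (p:ℚ) * x = (p:ℤ) • x := by rw [zsmul_eq_mul]; norm_num
        rw [this, map_zsmul, hx]
        have : (p:ℤ) • (QuotientAddGroup.mk ((p:ℚ)⁻¹) : QmodZ)
            = QuotientAddGroup.mk ((p:ℤ) • ((p:ℚ)⁻¹)) := rfl
        rw [this, QuotientAddGroup.eq_zero_iff, mem_zmul_one]
        exact ⟨1, by rw [zsmul_eq_mul]; push_cast; exact (mul_inv_cancel₀ hp0).symm⟩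
      -- hence b⁻¹ * (p • x) ∈ A, divide by p to get b⁻¹ * x ∈ A, so x ∈ ker
      have h1 : b⁻¹ * ((p:ℚ) * x) ∈ A := by
        rw [hmemA]
        have : b * (b⁻¹ * ((p:ℚ) * x)) = (p:ℚ) * x := by field_simp
        rwa [this]
      have h2 : b⁻¹ * ((p:ℚ) * x) / p ∈ A := div_p_mem hp hall h1
      have h3 : x ∈ d.ker := by
        have h4 := (hmemA _).mp h2
        have heq : b * (b⁻¹ * ((p:ℚ) * x) / p) = x := by field_simp
        rwa [heq] at h4
      -- contradiction : mk p⁻¹ = 0 forces p = 1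
      rw [AddMonoidHom.mem_ker, hx, QuotientAddGroup.eq_zero_iff, mem_zmul_one] at h3
      obtain ⟨n, hn⟩ := h3
      have : (n * p : ℤ) = 1 := by
        have : (n : ℚ) * p = 1 := by rw [hn]; field_simp
        exact_mod_cast this
      have : (p : ℤ) ∣ 1 := Dvd.intro_left n this
      have hple := Int.le_of_dvd one_pos this
      have := hp.two_le
      omega
  · -- backward
    rintro ⟨A, hle, hfin, ⟨e⟩⟩
    classical
    have h1A : (1:ℚ) ∈ A := hle (AddSubgroup.mem_zmultiples 1)
    -- step 1 : inverse prime powers in the range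
    have hstep : ∀ p : ℕ, p.Prime → ∀ k : ℕ,
        (QuotientAddGroup.mk (((p:ℚ)^(k+1))⁻¹) : QmodZ) ∈ d.range := by
      intro p hp k
      have hp0 : (p:ℚ) ≠ 0 := Nat.cast_ne_zero.mpr hp.ne_zero
      set a : ℚ := (e ⟨b, hbK⟩ : ℚ) with haa
      have haA : a ∈ A := (e ⟨b, hbK⟩).2
      have ha0 : a ≠ 0 := by
        intro h
        have h2 : e ⟨b, hbK⟩ = 0 := by
          ext; exact h
        have h3 : (⟨b, hbK⟩ : d.ker) = 0 := by
          exact (EmbeddingLike.map_eq_zero_iff).mp h2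
        exact hb0 (congrArg Subtype.val h3)
      obtain ⟨Np, hNp⟩ := bounded_div hp h1A (hfin p hp) haA ha0
      have hbound : ∀ j : ℕ, b / (p:ℚ)^j ∈ d.ker → j ≤ Np := by
        intro j hj
        apply hNp
        have hsm : ((p^j : ℕ) • (⟨b / (p:ℚ)^j, hj⟩ : d.ker)) = ⟨b, hbK⟩ := by
          ext
          push_cast
          field_simp
          rw [nsmul_eq_mul]; push_cast; field_simp
        have : a = ((p^j : ℕ)) • (e ⟨b / (p:ℚ)^j, hj⟩ : ℚ) := by
          rw [haa, ← hsm, map_nsmul]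
          rfl
        have heq : (e ⟨b / (p:ℚ)^j, hj⟩ : ℚ) = a / (p:ℚ)^j := by
          rw [this]
          push_cast
          field_simp
          rw [nsmul_eq_mul]; push_cast; ring
        rw [← heq]
        exact (e ⟨b / (p:ℚ)^j, hj⟩).2
      set P : ℕ → Prop := fun j => b / (p:ℚ)^j ∈ d.ker with hPdef
      have hP0 : P 0 := by simpa [hPdef] using hbK
      set h : ℕ := Nat.findGreatest P Np with hh
      have hPh : P h := Nat.findGreatest_spec (Nat.zero_le Np) hP0
      have hnot : ¬ P (h+1) := by
        intro hc
        exact Nat.findGreatest_is_greatest (Nat.lt_succ_of_le le_rfl) (hbound _ hc) hc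
      set x : ℚ := b / (p:ℚ)^(h + (k+1)) with hx
      obtain ⟨q, hq⟩ := QuotientAddGroup.mk_surjective (d x)
      -- p^(k+1) * q is an integer n
      have hint : ∃ n : ℤ, (n:ℚ) = (p:ℚ)^(k+1) * q := by
        have hxe : ((p:ℤ)^(k+1)) • x = b / (p:ℚ)^h := by
          rw [zsmul_eq_mul, hx]
          push_cast
          rw [pow_add]
          field_simp
          ring
        have : d (((p:ℤ)^(k+1)) • x) = 0 := by
          rw [hxe]; exact hPh
        rw [map_zsmul, ← hq] at this
        have h5 : ((p:ℤ)^(k+1)) • (QuotientAddGroup.mk q : QmodZ)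
            = QuotientAddGroup.mk (((p:ℤ)^(k+1)) • q) := rfl
        rw [h5, QuotientAddGroup.eq_zero_iff, mem_zmul_one] at this
        obtain ⟨n, hn⟩ := this
        exact ⟨n, by rw [hn, zsmul_eq_mul]; push_cast; ring⟩
      obtain ⟨n, hn⟩ := hint
      -- p ∤ n
      have hndvd : ¬ (p:ℤ) ∣ n := by
        intro ⟨m, hm⟩
        apply hnot
        have hmq : (m : ℚ) = (p:ℚ)^k * q := by
          have : ((p:ℚ)) * m = (p:ℚ) * ((p:ℚ)^k * q) := by
            rw [← mul_assoc, ← pow_succ']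
            rw [← hn, hm]
            push_cast; ring
          exact mul_left_cancel₀ hp0 this
        have hxe : ((p:ℤ)^k) • x = b / (p:ℚ)^(h+1) := by
          rw [zsmul_eq_mul, hx]
          push_cast
          rw [pow_add, pow_add]
          field_simp
          ring
        have h6 : d (((p:ℤ)^k) • x) = 0 := by
          rw [map_zsmul, ← hq]
          have h5 : ((p:ℤ)^k) • (QuotientAddGroup.mk q : QmodZ)
              = QuotientAddGroup.mk (((p:ℤ)^k) • q) := rfl
          rw [h5, QuotientAddGroup.eq_zero_iff, mem_zmul_one]
          refine ⟨m, ?_⟩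
          rw [zsmul_eq_mul]
          push_cast
          exact_mod_cast hmq
        rw [hxe] at h6
        exact h6
      -- Bezout
      have hco : IsCoprime n ((p:ℤ)^(k+1)) := by
        refine (IsCoprime.pow_right ?_)
        exact (((Nat.prime_iff_prime_int.mp hp).coprime_iff_not_dvd).mpr hndvd).symm
      obtain ⟨u, w, huw⟩ := hco
      refine ⟨u • x, ?_⟩
      rw [map_zsmul, ← hq]
      have h5 : u • (QuotientAddGroup.mk q : QmodZ) = QuotientAddGroup.mk (u • q) := rfl
      rw [h5]
      rw [QuotientAddGroup.eq]
      rw [mem_zmul_one]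
      refine ⟨w, ?_⟩
      have hppos : ((p:ℚ)^(k+1)) ≠ 0 := by positivity
      have huwQ : (u:ℚ) * n + (w:ℚ) * (p:ℚ)^(k+1) = 1 := by exact_mod_cast huw
      have hqv : q = (n:ℚ)/(p:ℚ)^(k+1) := by
        rw [eq_div_iff hppos, mul_comm]; exact hn.symm
      rw [zsmul_eq_mul, hqv]
      field_simp
      linear_combination huwQ
    -- step 2 : induction on denominators
    have main : ∀ n : ℕ, ∀ q : ℚ, q.den = n → (QuotientAddGroup.mk q : QmodZ) ∈ d.range := by
      intro n
      induction n using Nat.strong_induction_on with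
      | _ n ih =>
        intro q hden
        by_cases hq1 : q.den = 1
        · have : (QuotientAddGroup.mk q : QmodZ) = 0 := by
            rw [QuotientAddGroup.eq_zero_iff, mem_zmul_one]
            refine ⟨q.num, ?_⟩
            rw [← Rat.num_div_den q, hq1]
            norm_num
          rw [this]; exact zero_mem _
        · obtain ⟨p, hp, hpd⟩ := Nat.exists_prime_and_dvd hq1
          have hden0 : q.den ≠ 0 := q.den_nz
          set a := q.den.factorization p with hadef
          set t := q.den / p^a with htdef
          have ht : p^a * t = q.den := Nat.ordProj_mul_ordCompl_eq_self _ p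
          have ha1 : 0 < a := hp.factorization_pos_of_dvd hden0 hpd
          have ht0 : t ≠ 0 := by
            intro h; rw [h, mul_zero] at ht; exact hden0 ht.symm
          have hcop : Nat.Coprime (p^a) t := (Nat.coprime_ordCompl hp hden0).pow_left _
          obtain ⟨u, w, huw⟩ := Nat.isCoprime_iff_coprime.mpr hcop
          have hp0 : (p:ℚ) ≠ 0 := Nat.cast_ne_zero.mpr hp.ne_zero
          have ht0' : (t:ℚ) ≠ 0 := Nat.cast_ne_zero.mpr ht0
          have hdenQ : (q.den : ℚ) = (p:ℚ)^a * t := by exact_mod_cast (congrArg (fun m : ℕ => (m:ℚ)) ht).symm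
          have hxd := Rat.mul_den_eq_num q
          have hqeq : q = ((q.num * u : ℤ) : ℚ) / t + ((q.num * w : ℤ):ℚ) / (p:ℚ)^a := by
            have huwQ : (u:ℚ) * (p:ℚ)^a + (w:ℚ) * t = 1 := by exact_mod_cast huw
            have hxdQ : q * ((p:ℚ)^a * t) = q.num := by rw [← hdenQ]; exact_mod_cast hxd
            push_cast
            field_simp
            linear_combination hxdQ - ((q.num:ℚ)) * huwQ
          rw [hqeq]
          have hmkadd : (QuotientAddGroup.mk (((q.num * u : ℤ) : ℚ) / t + ((q.num * w : ℤ):ℚ) / (p:ℚ)^a) : QmodZ)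
              = QuotientAddGroup.mk (((q.num * u : ℤ) : ℚ) / t) + QuotientAddGroup.mk (((q.num * w : ℤ):ℚ) / (p:ℚ)^a) := rfl
          rw [hmkadd]
          apply add_mem
          · -- denominator divides t < n
            refine ih ((((q.num * u : ℤ) : ℚ) / t).den) ?_ _ rfl
            have h7 : ((q.num * u : ℤ) : ℚ) / (t:ℚ) = (Rat.divInt (q.num * u) (t:ℤ)) := by
              rw [Rat.divInt_eq_div]; norm_num
            have hdvd : (((((q.num * u : ℤ) : ℚ) / t)).den : ℤ) ∣ (t : ℤ) := by
              rw [h7]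
              exact_mod_cast Rat.den_dvd (q.num * u) (t:ℤ)
            have hdvd' : ((((q.num * u : ℤ) : ℚ) / t)).den ∣ t := by exact_mod_cast hdvd
            have hle1 : ((((q.num * u : ℤ) : ℚ) / t)).den ≤ t := Nat.le_of_dvd (Nat.pos_of_ne_zero ht0) hdvd'
            have hplt : 1 < p^a := by
              have := hp.two_le
              calc 1 < p := hp.one_lt
              _ ≤ p^a := Nat.le_self_pow (by omega) p
            have : t < q.den := by
              rw [← ht]
              have ht1 : 1 ≤ t := Nat.pos_of_ne_zero ht0
              calc t = 1 * t := (one_mul t).symm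
              _ < p^a * t := (Nat.mul_lt_mul_right ht1).mpr hplt
            exact lt_of_le_of_lt hle1 (hden ▸ this)
          · -- prime power part
            have heq2 : ((q.num * w : ℤ):ℚ) / (p:ℚ)^a = (q.num * w : ℤ) • ((p:ℚ)^((a-1)+1))⁻¹ := by
              have ha' : (a-1)+1 = a := by omega
              rw [zsmul_eq_mul, div_eq_mul_inv, ha']
            rw [heq2]
            have h5 : ((q.num * w : ℤ)) • (QuotientAddGroup.mk (((p:ℚ)^((a-1)+1))⁻¹) : QmodZ)
                = QuotientAddGroup.mk ((q.num * w : ℤ) • ((p:ℚ)^((a-1)+1))⁻¹) := rfl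
            rw [← h5]
            exact AddSubgroup.zsmul_mem _ (hstep p hp (a-1)) _
    intro z
    obtain ⟨q, hq⟩ := QuotientAddGroup.mk_surjective z
    obtain ⟨x, hx⟩ := main q.den q rfl
    exact ⟨x, by rw [hx, hq]⟩
end
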